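/- For every natural number n, the sum over all B-paths P of length n of t^{e(P)}, where e(P) is the number of down-steps of P whose endpoint has even second coordinate, equals the polynomial Σ_{j=0}^{⌊n/2⌋} C(⌊n/2⌋, j)·C(⌊(n+1)/2⌋, j)·t^j (an identity of polynomials in the indeterminate t). -/

import Mathlib

/-- A step of a lattice path: up-step (1,1), down-step (1,-1), or horizontal step (1,0). -/
inductive Step where
  | U : Step
  | D : Step
  | H : Step
deriving DecidableEq

instance instFintypeStep : Fintype Step :=
  ⟨{Step.U, Step.D, Step.H}, fun x => by cases x <;> simp⟩

/-- The change in the second coordinate produced by a step. -/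
def stepVal : Step → ℤ
  | .U => 1
  | .D => -1
  | .H => 0

/-- The height (second coordinate) reached after performing the steps of `l`, starting at 0. -/
def hgt (l : List Step) : ℤ := (l.map stepVal).sum

/-- `l` is a B-path: it returns to height 0, never goes below the x-axis, and all
horizontal steps occur at height 0 (stated with bounded quantifiers, which is equivalent). -/
def IsBPath (l : List Step) : Prop :=
  hgt l = 0 ∧ (∀ i < l.length + 1, 0 ≤ hgt (l.take i)) ∧
    ∀ i < l.length, l[i]? = some Step.H → hgt (l.take i) = 0

instance (l : List Step) : Decidable (IsBPath l) :=
  inferInstanceAs (Decidable (_ ∧ _ ∧ _))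

/-- `e l` is the number of down-steps of `l` whose endpoint has even second coordinate. -/
def e (l : List Step) : ℕ :=
  ((Finset.range l.length).filter
    (fun i => l[i]? = some Step.D ∧ Even (hgt (l.take (i + 1))))).card

/-! ### Auxiliary development -/

/-- Prefix condition of a B-path: never below the axis, horizontal steps only at height 0. -/
def Pre (l : List Step) : Prop :=
  (∀ i < l.length + 1, 0 ≤ hgt (l.take i)) ∧
    ∀ i < l.length, l[i]? = some Step.H → hgt (l.take i) = 0

instance (l : List Step) : Decidable (Pre l) :=
  inferInstanceAs (Decidable (_ ∧ _))

/-- Weighted count of B-path prefixes of length `n` ending at height `h`. -/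
noncomputable def S (n : ℕ) (h : ℤ) : Polynomial ℤ :=
  ∑ g ∈ Finset.univ.filter
      (fun g : Fin n → Step => Pre (List.ofFn g) ∧ hgt (List.ofFn g) = h),
    (Polynomial.X : Polynomial ℤ) ^ e (List.ofFn g)

/-- The conjectured coefficients. -/
def cc (n h j : ℕ) : ℕ :=
  if h % 2 = 0 then Nat.choose (n / 2) (j + h / 2) * Nat.choose ((n + 1) / 2) j
  else Nat.choose (n / 2) j * Nat.choose ((n + 1) / 2) (j + h / 2 + 1)

/-- The conjectured closed form. -/
noncomputable def Q (n h : ℕ) : Polynomial ℤ :=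
  ∑ j ∈ Finset.range (n + 1), Polynomial.C (cc n h j : ℤ) * Polynomial.X ^ j

lemma hgt_append (l : List Step) (s : Step) : hgt (l ++ [s]) = hgt l + stepVal s := by
  simp [hgt]

lemma hgt_nil : hgt [] = 0 := rfl

lemma Pre_nonneg {l : List Step} (hp : Pre l) : 0 ≤ hgt l := by
  have := hp.1 l.length (by omega)
  simpa using this

lemma ofFn_snoc {n : ℕ} (g : Fin n → Step) (s : Step) :
    List.ofFn (Fin.snoc g s) = List.ofFn g ++ [s] := by
  rw [List.ofFn_succ']
  simp [Fin.snoc_castSucc, Fin.snoc_last, List.concat_eq_append]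

lemma Pre_append (l : List Step) (s : Step) :
    Pre (l ++ [s]) ↔ Pre l ∧ 0 ≤ hgt l + stepVal s ∧ (s = Step.H → hgt l = 0) := by
  have len : (l ++ [s]).length = l.length + 1 := by simp
  constructor
  · intro hp
    refine ⟨⟨fun i hi => ?_, fun i hi hH => ?_⟩, ?_, ?_⟩
    · have := hp.1 i (by omega)
      rwa [List.take_append_of_le_length (by omega)] at this
    · have := hp.2 i (by omega)
      rw [List.getElem?_append_left (by omega),
        List.take_append_of_le_length (by omega)] at this
      exact this hH
    · have := hp.1 (l.length + 1) (by omega)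
      rwa [List.take_of_length_le (by omega), hgt_append] at this
    · intro hs
      subst hs
      have := hp.2 l.length (by omega) (by rw [List.getElem?_concat_length])
      rwa [List.take_append_of_le_length le_rfl, List.take_length] at this
  · rintro ⟨⟨hp1, hp2⟩, hns, hH⟩
    constructor
    · intro i hi
      rcases Nat.lt_or_ge i (l.length + 1) with h' | h'
      · rw [List.take_append_of_le_length (by omega)]
        exact hp1 i h'
      · have hi' : i = l.length + 1 := by omega
        subst hi'
        rw [List.take_of_length_le (by omega), hgt_append]
        exact hns
    · intro i hi hHi
      rcases Nat.lt_or_ge i l.length with h' | h'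
      · rw [List.take_append_of_le_length (by omega)]
        apply hp2 i h'
        rwa [List.getElem?_append_left h'] at hHi
      · have hi' : i = l.length := by omega
        subst hi'
        rw [List.take_append_of_le_length le_rfl, List.take_length]
        apply hH
        rw [List.getElem?_concat_length] at hHi
        exact (Option.some.injEq _ _ ▸ hHi)

lemma e_append (l : List Step) (s : Step) :
    e (l ++ [s]) = e l + (if s = Step.D ∧ Even (hgt l + stepVal s) then 1 else 0) := by
  unfold e
  have len : (l ++ [s]).length = l.length + 1 := by simp
  rw [len, Finset.range_add_one, Finset.filter_insert]
  have hmain : Finset.filter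
      (fun i => (l ++ [s])[i]? = some Step.D ∧ Even (hgt ((l ++ [s]).take (i + 1))))
      (Finset.range l.length)
      = Finset.filter (fun i => l[i]? = some Step.D ∧ Even (hgt (l.take (i + 1))))
        (Finset.range l.length) := by
    apply Finset.filter_congr
    intro i hi
    rw [Finset.mem_range] at hi
    rw [List.getElem?_append_left hi, List.take_append_of_le_length (by omega)]
  have hlast : ((l ++ [s])[l.length]? = some Step.D ∧
      Even (hgt ((l ++ [s]).take (l.length + 1))))
      ↔ (s = Step.D ∧ Even (hgt l + stepVal s)) := by
    rw [List.getElem?_concat_length, List.take_of_length_le (by omega), hgt_append]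
    simp
  rw [hmain]
  split
  · next hc =>
    rw [Finset.card_insert_of_notMem (by
      intro hmem
      have := Finset.mem_of_mem_filter _ hmem
      simp at this), if_pos (hlast.mp hc)]
  · next hc =>
    rw [if_neg (fun hx => hc (hlast.mpr hx)), add_zero]

lemma S_neg (n : ℕ) (h : ℤ) (hh : h < 0) : S n h = 0 := by
  unfold S
  rw [Finset.filter_false_of_mem, Finset.sum_empty]
  rintro g - ⟨hp, he⟩
  exact absurd (he ▸ Pre_nonneg hp) (by omega)

lemma S_zero (h : ℤ) : S 0 h = if h = 0 then 1 else 0 := by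
  unfold S
  rw [Finset.sum_filter, Finset.univ_unique, Finset.sum_singleton]
  have h0 : List.ofFn (default : Fin 0 → Step) = [] := List.ofFn_zero
  rw [h0]
  have hpre : Pre [] := ⟨fun i _ => by simp [hgt], fun i hi => by simp at hi⟩
  simp [hpre, e, hgt, eq_comm]

lemma stepVal_U : stepVal Step.U = 1 := rfl
lemma stepVal_D : stepVal Step.D = -1 := rfl
lemma stepVal_H : stepVal Step.H = 0 := rfl

lemma sumU (n : ℕ) (h : ℤ) :
    (∑ g : Fin n → Step, if Pre (List.ofFn g ++ [Step.U]) ∧ hgt (List.ofFn g ++ [Step.U]) = h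
        then (Polynomial.X : Polynomial ℤ) ^ e (List.ofFn g ++ [Step.U]) else 0)
      = S n (h - 1) := by
  unfold S
  rw [Finset.sum_filter]
  refine Finset.sum_congr rfl fun g _ => ?_
  set l := List.ofFn g with hl
  have hiff : (Pre (l ++ [Step.U]) ∧ hgt (l ++ [Step.U]) = h) ↔ (Pre l ∧ hgt l = h - 1) := by
    rw [Pre_append, hgt_append, stepVal_U]
    constructor
    · rintro ⟨⟨hp, -, -⟩, hv⟩
      exact ⟨hp, by omega⟩
    · rintro ⟨hp, hv⟩
      exact ⟨⟨hp, by have := Pre_nonneg hp; omega, by simp⟩, by omega⟩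
  rw [if_congr hiff rfl rfl]
  by_cases hc : Pre l ∧ hgt l = h - 1
  · rw [if_pos hc, if_pos hc, e_append, stepVal_U, if_neg (by simp), add_zero]
  · rw [if_neg hc, if_neg hc]

lemma sumH (n : ℕ) (h : ℤ) :
    (∑ g : Fin n → Step, if Pre (List.ofFn g ++ [Step.H]) ∧ hgt (List.ofFn g ++ [Step.H]) = h
        then (Polynomial.X : Polynomial ℤ) ^ e (List.ofFn g ++ [Step.H]) else 0)
      = if h = 0 then S n 0 else 0 := by
  by_cases h0 : h = 0
  · subst h0
    rw [if_pos rfl]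
    unfold S
    rw [Finset.sum_filter]
    refine Finset.sum_congr rfl fun g _ => ?_
    set l := List.ofFn g with hl
    have hiff : (Pre (l ++ [Step.H]) ∧ hgt (l ++ [Step.H]) = 0) ↔ (Pre l ∧ hgt l = 0) := by
      rw [Pre_append, hgt_append, stepVal_H]
      constructor
      · rintro ⟨⟨hp, -, hz⟩, -⟩
        exact ⟨hp, hz rfl⟩
      · rintro ⟨hp, hz⟩
        exact ⟨⟨hp, by omega, fun _ => hz⟩, by omega⟩
    rw [if_congr hiff rfl rfl]
    by_cases hc : Pre l ∧ hgt l = 0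
    · rw [if_pos hc, if_pos hc, e_append, stepVal_H, if_neg (by simp), add_zero]
    · rw [if_neg hc, if_neg hc]
  · rw [if_neg h0]
    apply Finset.sum_eq_zero
    intro g _
    rw [if_neg]
    rintro ⟨hp, hv⟩
    rw [Pre_append] at hp
    rw [hgt_append, stepVal_H] at hv
    exact h0 (by rw [← hv, hp.2.2 rfl]; ring)

lemma sumD (n : ℕ) (h : ℤ) (hh : 0 ≤ h) :
    (∑ g : Fin n → Step, if Pre (List.ofFn g ++ [Step.D]) ∧ hgt (List.ofFn g ++ [Step.D]) = h
        then (Polynomial.X : Polynomial ℤ) ^ e (List.ofFn g ++ [Step.D]) else 0)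
      = (if Even h then Polynomial.X else 1) * S n (h + 1) := by
  unfold S
  rw [Finset.mul_sum, Finset.sum_filter]
  refine Finset.sum_congr rfl fun g _ => ?_
  set l := List.ofFn g with hl
  have hiff : (Pre (l ++ [Step.D]) ∧ hgt (l ++ [Step.D]) = h) ↔ (Pre l ∧ hgt l = h + 1) := by
    rw [Pre_append, hgt_append, stepVal_D]
    constructor
    · rintro ⟨⟨hp, -, -⟩, hv⟩
      exact ⟨hp, by omega⟩
    · rintro ⟨hp, hv⟩
      exact ⟨⟨hp, by omega, by simp⟩, by omega⟩
  rw [if_congr hiff rfl rfl]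
  by_cases hc : Pre l ∧ hgt l = h + 1
  · rw [if_pos hc, if_pos hc, e_append, stepVal_D]
    have hv : hgt l + -1 = h := by have := hc.2; omega
    rw [hv]
    by_cases hev : Even h
    · rw [if_pos ⟨rfl, hev⟩, if_pos hev, pow_succ]
      ring
    · rw [if_neg (fun hx => hev hx.2), if_neg hev, add_zero, one_mul]
  · rw [if_neg hc, if_neg hc]

lemma S_succ (n : ℕ) (h : ℤ) (hh : 0 ≤ h) :
    S (n + 1) h = (if h = 0 then S n 0 else 0) + S n (h - 1)
      + (if Even h then Polynomial.X else 1) * S n (h + 1) := by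
  have huniv : (Finset.univ : Finset Step) = {Step.U, Step.D, Step.H} := by decide
  have key : ∀ p : Step × (Fin n → Step),
      List.ofFn (Fin.snocEquiv (fun _ => Step) p) = List.ofFn p.2 ++ [p.1] :=
    fun p => ofFn_snoc p.2 p.1
  have step1 : S (n + 1) h = ∑ p : Step × (Fin n → Step),
      (if Pre (List.ofFn p.2 ++ [p.1]) ∧ hgt (List.ofFn p.2 ++ [p.1]) = h
        then (Polynomial.X : Polynomial ℤ) ^ e (List.ofFn p.2 ++ [p.1]) else 0) := by
    unfold S
    rw [Finset.sum_filter, ← Equiv.sum_comp (Fin.snocEquiv (fun _ => Step))]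
    exact Finset.sum_congr rfl fun p _ => by rw [key p]
  rw [step1, Fintype.sum_prod_type, huniv, Finset.sum_insert (by decide),
    Finset.sum_insert (by decide), Finset.sum_singleton, sumU n h, sumD n h hh, sumH n h]
  ring

lemma cc_eq_zero {n h j : ℕ} (hj : n + 1 ≤ j) : cc n h j = 0 := by
  unfold cc
  split
  · have : ((n + 1) / 2).choose j = 0 := Nat.choose_eq_zero_of_lt (by omega)
    simp [this]
  · have : (n / 2).choose j = 0 := Nat.choose_eq_zero_of_lt (by omega)
    simp [this]

lemma coeff_Q (n h k : ℕ) : (Q n h).coeff k = (cc n h k : ℤ) := by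
  unfold Q
  rw [Polynomial.finset_sum_coeff]
  simp only [Polynomial.coeff_C_mul, Polynomial.coeff_X_pow, mul_ite, mul_one, mul_zero]
  rw [Finset.sum_ite_eq (Finset.range (n + 1)) k]
  split
  · rfl
  · next hk =>
    have : cc n h k = 0 := cc_eq_zero (by simpa using hk)
    simp [this]

lemma cc_rec_even (n h k : ℕ) (hh : h % 2 = 0) :
    cc (n + 1) (h + 1) k = cc n h k + cc n (h + 2) k := by
  unfold cc
  rw [if_neg (by omega), if_pos hh, if_pos (by omega)]
  have e1 : (h + 1) / 2 = h / 2 := by omega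
  have e3 : (n + 1 + 1) / 2 = n / 2 + 1 := by omega
  have e4 : k + (h + 2) / 2 = k + h / 2 + 1 := by omega
  rw [e1, e3, e4, Nat.choose_succ_succ]
  ring

lemma cc_rec_odd (n h k : ℕ) (hh : h % 2 = 1) :
    cc (n + 1) (h + 1) (k + 1) = cc n h (k + 1) + cc n (h + 2) k := by
  unfold cc
  rw [if_pos (by omega), if_neg (by omega), if_neg (by omega)]
  have e1 : k + 1 + (h + 1) / 2 = k + h / 2 + 2 := by omega
  have e2 : k + 1 + h / 2 + 1 = k + h / 2 + 2 := by omega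
  have e3 : k + (h + 2) / 2 + 1 = k + h / 2 + 2 := by omega
  have e4 : (n + 1 + 1) / 2 = n / 2 + 1 := by omega
  rw [e1, e2, e3, e4, Nat.choose_succ_succ]
  ring

lemma cc_rec_odd_zero (n h : ℕ) (hh : h % 2 = 1) :
    cc (n + 1) (h + 1) 0 = cc n h 0 := by
  unfold cc
  rw [if_pos (by omega), if_neg (by omega)]
  have e1 : 0 + (h + 1) / 2 = 0 + h / 2 + 1 := by omega
  rw [e1]
  simp

lemma cc_rec_zero (n k : ℕ) :
    cc (n + 1) 0 (k + 1) = cc n 0 (k + 1) + cc n 1 k := by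
  unfold cc
  rw [if_pos (by omega), if_pos (by omega), if_neg (by omega)]
  have e1 : k + 1 + 0 / 2 = k + 1 := by omega
  have e2 : k + 1 / 2 + 1 = k + 1 := by omega
  have e4 : (n + 1 + 1) / 2 = n / 2 + 1 := by omega
  rw [e1, e2, e4, Nat.choose_succ_succ]
  ring

lemma cc_rec_zero_zero (n : ℕ) : cc (n + 1) 0 0 = cc n 0 0 := by
  simp [cc]

lemma Q_rec_zero (n : ℕ) : Q (n + 1) 0 = Q n 0 + Polynomial.X * Q n 1 := by
  ext k
  simp only [Polynomial.coeff_add, coeff_Q]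
  cases k with
  | zero =>
    rw [Polynomial.mul_coeff_zero, Polynomial.coeff_X_zero, zero_mul, add_zero,
      cc_rec_zero_zero]
  | succ k =>
    rw [Polynomial.coeff_X_mul, coeff_Q, cc_rec_zero]
    push_cast
    ring

lemma Q_rec_even (n h : ℕ) (hh : h % 2 = 0) :
    Q (n + 1) (h + 1) = Q n h + Q n (h + 2) := by
  ext k
  simp only [Polynomial.coeff_add, coeff_Q, cc_rec_even n h k hh]
  push_cast
  ring

lemma Q_rec_odd (n h : ℕ) (hh : h % 2 = 1) :
    Q (n + 1) (h + 1) = Q n h + Polynomial.X * Q n (h + 2) := by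
  ext k
  simp only [Polynomial.coeff_add, coeff_Q]
  cases k with
  | zero =>
    rw [Polynomial.mul_coeff_zero, Polynomial.coeff_X_zero, zero_mul, add_zero,
      cc_rec_odd_zero n h hh]
  | succ k =>
    rw [Polynomial.coeff_X_mul, coeff_Q, cc_rec_odd n h k hh]
    push_cast
    ring

lemma S_eq_Q : ∀ n (h : ℕ), S n (h : ℤ) = Q n h := by
  intro n
  induction n with
  | zero =>
    intro h
    rw [S_zero]
    unfold Q
    rw [Finset.sum_range_one, pow_zero, mul_one]
    by_cases h0 : h = 0
    · subst h0
      norm_num [cc]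
    · rw [if_neg (by exact_mod_cast h0)]
      have hz : cc 0 h 0 = 0 := by
        unfold cc
        split
        · next hp =>
          have h2 : 0 < h / 2 := by omega
          have h3 : Nat.choose (0 / 2) (0 + h / 2) = 0 := by
            apply Nat.choose_eq_zero_of_lt
            omega
          rw [h3, zero_mul]
        · have : Nat.choose (0 / 2) 0 * Nat.choose ((0 + 1) / 2) (0 + h / 2 + 1) = 0 := by
            have h3 : Nat.choose ((0 + 1) / 2) (0 + h / 2 + 1) = 0 := by
              apply Nat.choose_eq_zero_of_lt
              omega
            rw [h3, mul_zero]
          exact this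
      rw [hz]
      simp
  | succ n ih =>
    intro h
    match h with
    | 0 =>
      have i0 := ih 0
      have i1 := ih 1
      rw [Nat.cast_zero] at i0
      rw [Nat.cast_one] at i1
      rw [Nat.cast_zero, S_succ n 0 le_rfl, if_pos rfl, if_pos Even.zero,
        show (0 : ℤ) - 1 = -1 by ring, S_neg n (-1) (by norm_num), add_zero,
        show (0 : ℤ) + 1 = (1 : ℤ) by ring, i0, i1, Q_rec_zero]
    | k + 1 =>
      have hcast : ((k + 1 : ℕ) : ℤ) = (k : ℤ) + 1 := by push_cast; ring
      have ik := ih k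
      have ik2 := ih (k + 2)
      rw [hcast, S_succ n ((k : ℤ) + 1) (by positivity), if_neg (by omega),
        show (k : ℤ) + 1 - 1 = ((k : ℕ) : ℤ) by ring,
        show (k : ℤ) + 1 + 1 = ((k + 2 : ℕ) : ℤ) by push_cast; ring,
        ik, ik2, zero_add]
      have hpar : Even ((k : ℤ) + 1) ↔ Even (k + 1) := by
        rw [show (k : ℤ) + 1 = ((k + 1 : ℕ) : ℤ) by push_cast; ring, Int.even_coe_nat]
      by_cases hev : Even (k + 1)
      · rw [if_pos (hpar.mpr hev)]
        have hk : k % 2 = 1 := by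
          rcases hev with ⟨m, hm⟩
          omega
        rw [Q_rec_odd n k hk]
      · rw [if_neg (fun hx => hev (hpar.mp hx))]
        have hk : k % 2 = 0 := by
          rw [Nat.even_add_one, Nat.even_iff] at hev
          omega
        rw [Q_rec_even n k hk, one_mul]

/-- The sum of `t^(e P)` over all B-paths `P` of length `n` equals
`Σ_{j=0}^{⌊n/2⌋} C(⌊n/2⌋,j)·C(⌊(n+1)/2⌋,j)·t^j`, as polynomials in `ℤ[t]`. -/
theorem stmt2 (n : ℕ) :
    ∑ g ∈ Finset.univ.filter (fun g : Fin n → Step => IsBPath (List.ofFn g)),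
        (Polynomial.X : Polynomial ℤ) ^ e (List.ofFn g)
      = ∑ j ∈ Finset.range (n / 2 + 1),
          Polynomial.C (((n / 2).choose j * ((n + 1) / 2).choose j : ℕ) : ℤ)
            * Polynomial.X ^ j := by
  have h1 : (Finset.univ.filter (fun g : Fin n → Step => IsBPath (List.ofFn g)))
      = Finset.univ.filter
        (fun g : Fin n → Step => Pre (List.ofFn g) ∧ hgt (List.ofFn g) = 0) := by
    apply Finset.filter_congr
    intro g _
    unfold IsBPath Pre
    tauto
  rw [h1]
  have h2 : (∑ g ∈ Finset.univ.filter
        (fun g : Fin n → Step => Pre (List.ofFn g) ∧ hgt (List.ofFn g) = 0),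
      (Polynomial.X : Polynomial ℤ) ^ e (List.ofFn g)) = S n ((0 : ℕ) : ℤ) := by
    norm_num [S]
  rw [h2, S_eq_Q n 0]
  unfold Q
  rw [← Finset.sum_subset (Finset.range_subset_range.mpr (by omega : n / 2 + 1 ≤ n + 1))]
  · apply Finset.sum_congr rfl
    intro j hj
    simp [cc]
  · intro j hj hj2
    have : (n / 2).choose (j + 0 / 2) = 0 := by
      apply Nat.choose_eq_zero_of_lt
      simp only [Finset.mem_range] at hj2
      omega
    have h3 : (n / 2).choose j = 0 := by simpa using this
    simp [cc, h3]
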